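/- Let J be a full-rank m×n real matrix with 2 ≤ m ≤ n. Define the local skewness of J as SK(J) = max over k of ‖j_k‖ / ‖j_k⊥‖, where j_k is the k-th row and j_k⊥ its component orthogonal to the span of the remaining rows. Then SK(J) = max over k of ‖j_k‖ · (∏_{i=1}^{m−1} σ_{k,i}) / (∏_{i=1}^m σ_i), where σ_i are the singular values of J and σ_{k,i} the singular values of the submatrix J_k obtained by deleting row k. -/

import Mathlib

open Matrix MeasureTheory Pointwise

/-- Singular values of a real matrix `J`: square roots of the eigenvalues of `J * Jᵀ`. -/
noncomputable def singularValues {p q : Type*} [Fintype p] [Fintype q] [DecidableEq p]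
    (J : Matrix p q ℝ) : p → ℝ :=
  fun i => Real.sqrt ((Matrix.isHermitian_mul_conjTranspose_self J).eigenvalues i)

/-- Euclidean norm of a vector in `ℝ^n` (written as a function). -/
noncomputable def euclNorm {q : Type*} [Fintype q] (v : q → ℝ) : ℝ :=
  Real.sqrt (∑ i, v i ^ 2)

/-- View a plain vector as an element of Euclidean space. -/
noncomputable def toE {n : ℕ} (v : Fin n → ℝ) : EuclideanSpace ℝ (Fin n) :=
  (WithLp.equiv 2 (Fin n → ℝ)).symm v

/-- The component of the `k`-th row of `J` orthogonal to the span of the other rows. -/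
noncomputable def perpRow {m n : ℕ} (J : Matrix (Fin m) (Fin n) ℝ) (k : Fin m) :
    EuclideanSpace ℝ (Fin n) :=
  toE (J k) -
    (Submodule.orthogonalProjection (Submodule.span ℝ {x | ∃ i, i ≠ k ∧ x = toE (J i)}) (toE (J k)) :
      EuclideanSpace ℝ (Fin n))

/-- The Moore–Penrose pseudo-inverse of a full row-rank matrix. -/
noncomputable def pinv {m n : ℕ} (J : Matrix (Fin m) (Fin n) ℝ) : Matrix (Fin n) (Fin m) ℝ :=
  Jᵀ * (J * Jᵀ)⁻¹

/-- The submatrix of `J` obtained by deleting row `k`. -/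
def delRow {m n : ℕ} (J : Matrix (Fin m) (Fin n) ℝ) (k : Fin m) :
    Matrix {i : Fin m // i ≠ k} (Fin n) ℝ :=
  J.submatrix (fun i => (i : Fin m)) id


lemma prod_sqrt {ι : Type*} (s : Finset ι) (f : ι → ℝ) (h : ∀ i ∈ s, 0 ≤ f i) :
    ∏ i ∈ s, Real.sqrt (f i) = Real.sqrt (∏ i ∈ s, f i) := by
  induction s using Finset.cons_induction with
  | empty => simp
  | cons a s ha ih =>
    rw [Finset.prod_cons, Finset.prod_cons,
      ih (fun i hi => h i (Finset.mem_cons_of_mem hi)),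
      ← Real.sqrt_mul (h a (Finset.mem_cons_self _ _))]

lemma prodSV {p q : Type*} [Fintype p] [Fintype q] [DecidableEq p] (A : Matrix p q ℝ) :
    ∏ i, singularValues A i = Real.sqrt ((A * Aᵀ).det) := by
  have hH := Matrix.isHermitian_mul_conjTranspose_self A
  have hnn : ∀ i, 0 ≤ hH.eigenvalues i := fun i =>
    (Matrix.posSemidef_self_mul_conjTranspose A).eigenvalues_nonneg i
  have hdet : (A * Aᴴ).det = ∏ i, hH.eigenvalues i := by
    simpa using hH.det_eq_prod_eigenvalues
  rw [← Matrix.conjTranspose_eq_transpose_of_trivial]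
  unfold singularValues
  rw [prod_sqrt _ _ (fun i _ => hnn i), hdet]

lemma detGram_nonneg {p q : Type*} [Fintype p] [Fintype q] [DecidableEq p] (A : Matrix p q ℝ) :
    0 ≤ (A * Aᵀ).det := by
  have hH := Matrix.isHermitian_mul_conjTranspose_self A
  have hdet : (A * Aᴴ).det = ∏ i, hH.eigenvalues i := by
    simpa using hH.det_eq_prod_eigenvalues
  rw [← Matrix.conjTranspose_eq_transpose_of_trivial, hdet]
  exact Finset.prod_nonneg fun i _ =>
    (Matrix.posSemidef_self_mul_conjTranspose A).eigenvalues_nonneg i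

lemma aux_isUnit_det {p : Type*} [Fintype p] [DecidableEq p] (A : Matrix p p ℝ)
    (h : A.rank = Fintype.card p) : IsUnit A.det := by
  have hLI : LinearIndependent ℝ (fun i => A i) :=
    linearIndependent_iff_card_eq_finrank_span.mpr (by
      rw [Set.finrank, show (fun i => A i) = A.row from rfl, ← Matrix.rank_eq_finrank_span_row, h])
  exact (Matrix.isUnit_iff_isUnit_det A).mp (Matrix.linearIndependent_rows_iff_isUnit.mp hLI)

lemma detGram_pos {p q : Type*} [Fintype p] [Fintype q] [DecidableEq p] (A : Matrix p q ℝ)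
    (h : LinearIndependent ℝ (fun i => A i)) : 0 < (A * Aᵀ).det := by
  have hr : (A * Aᵀ).rank = Fintype.card p := by
    rw [Matrix.rank_self_mul_transpose, h.rank_matrix]
  have := aux_isUnit_det _ hr
  exact lt_of_le_of_ne (detGram_nonneg A) (fun hc => by simp [← hc] at this)

lemma inner_toE {n : ℕ} (u : Fin n → ℝ) (w : EuclideanSpace ℝ (Fin n)) :
    (inner ℝ (toE u) w : ℝ) = ∑ l, u l * w l := by
  simp [PiLp.inner_apply, toE, mul_comm]

lemma key {m n : ℕ} (J : Matrix (Fin m) (Fin n) ℝ) (k : Fin m) :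
    (J * Jᵀ).det = ‖perpRow J k‖ ^ 2 * ((delRow J k) * (delRow J k)ᵀ).det := by
  classical
  set S : Set (EuclideanSpace ℝ (Fin n)) := {x | ∃ i, i ≠ k ∧ x = toE (J i)} with hS
  have hSrange : S = Set.range (fun i : {i : Fin m // i ≠ k} => toE (J i.val)) := by
    ext x
    constructor
    · rintro ⟨i, hi, rfl⟩; exact ⟨⟨i, hi⟩, rfl⟩
    · rintro ⟨⟨i, hi⟩, rfl⟩; exact ⟨i, hi, rfl⟩
  set proj : EuclideanSpace ℝ (Fin n) :=
    (Submodule.orthogonalProjection (Submodule.span ℝ S) (toE (J k)) : EuclideanSpace ℝ (Fin n)) with hproj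
  have hmem : proj ∈ Submodule.span ℝ S := SetLike.coe_mem _
  rw [hSrange] at hmem
  obtain ⟨c, hc⟩ := (Submodule.mem_span_range_iff_exists_fun ℝ).mp hmem
  set c' : Fin m → ℝ := fun i => if h : i = k then 0 else c ⟨i, h⟩ with hc'
  set w : Fin n → ℝ := J k - ∑ i, c' i • J i with hw
  set J' : Matrix (Fin m) (Fin n) ℝ := Matrix.updateRow J k w with hJ'
  have hrowk : J' k = w := Matrix.updateRow_self
  have hrowne : ∀ i : Fin m, i ≠ k → J' i = J i := fun i hi => Matrix.updateRow_ne hi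
  -- J' = E * J
  have hE : J' = (1 - Matrix.replicateCol Unit (Pi.single k (1:ℝ)) * Matrix.replicateRow Unit c') * J := by
    ext i j
    rcases eq_or_ne i k with hik | hik
    · rw [hik, hJ', Matrix.updateRow_self]
      have hEk : ∀ l, ((1 : Matrix (Fin m) (Fin m) ℝ)
          - Matrix.replicateCol Unit (Pi.single k (1:ℝ)) * Matrix.replicateRow Unit c') k l
          = (if k = l then (1:ℝ) else 0) - c' l := by
        intro l; simp [Matrix.mul_apply, Matrix.one_apply, Matrix.sub_apply,
          Matrix.replicateCol_apply, Matrix.replicateRow_apply, Pi.single_apply]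
      rw [Matrix.mul_apply]
      simp only [hEk, sub_mul, Finset.sum_sub_distrib, ite_mul, one_mul, zero_mul,
        Finset.sum_ite_eq, Finset.mem_univ, if_true]
      simp [hw, Finset.sum_apply, mul_comm]
    · rw [hJ', Matrix.updateRow_ne hik]
      simp [Matrix.mul_apply, Matrix.sub_apply, Matrix.one_apply, Matrix.replicateCol_apply,
        Matrix.replicateRow_apply, Pi.single_apply, hik, sub_mul, Finset.sum_sub_distrib]
  have hdetE : (1 - Matrix.replicateCol Unit (Pi.single k (1:ℝ)) * Matrix.replicateRow Unit c').det = 1 := by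
    have h1 : (1 : Matrix (Fin m) (Fin m) ℝ)
          - Matrix.replicateCol Unit (Pi.single k (1:ℝ)) * Matrix.replicateRow Unit c'
        = 1 + Matrix.replicateCol Unit (Pi.single k (1:ℝ)) * Matrix.replicateRow Unit (-c') := by
      ext i j
      simp [Matrix.mul_apply, Matrix.sub_apply, Matrix.add_apply, Matrix.replicateCol_apply,
        Matrix.replicateRow_apply, sub_eq_add_neg, mul_neg]
    rw [h1, Matrix.det_one_add_replicateCol_mul_replicateRow]
    simp [dotProduct, Pi.single_apply, hc']
  have hdet' : (J' * J'ᵀ).det = (J * Jᵀ).det := by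
    rw [hE, Matrix.transpose_mul, ← Matrix.mul_assoc, Matrix.mul_assoc _ J Jᵀ,
      Matrix.det_mul, Matrix.det_mul, Matrix.det_transpose, hdetE]
    ring
  -- the projection as a plain vector
  have hprojfun : ∀ j, proj j = ∑ i : {i : Fin m // i ≠ k}, c i * J i.val j := by
    intro j
    have h1 := congrArg (WithLp.linearEquiv 2 ℝ (Fin n → ℝ)) hc
    rw [map_sum] at h1
    have h2 := congrFun h1.symm j
    simpa [toE, Finset.sum_apply] using h2
  have hsum : ∀ j, (∑ i, c' i • J i) j = ∑ i : {i : Fin m // i ≠ k}, c i * J i.val j := by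
    intro j
    rw [Finset.sum_apply,
      ← Finset.add_sum_erase _ (fun i => (c' i • J i) j) (Finset.mem_univ k),
      Finset.sum_subtype (p := fun i => i ≠ k) (Finset.univ.erase k)
        (fun i => by simp [Finset.mem_erase]) (fun i => (c' i • J i) j)]
    simp only [hc', dif_pos rfl, Pi.smul_apply, smul_eq_mul, zero_mul, zero_add]
    exact Finset.sum_congr rfl fun i _ => by rw [dif_neg i.prop]
  have hperp : ∀ j, perpRow J k j = w j := by
    intro j
    show (toE (J k) - proj) j = _
    have h1 : (toE (J k) - proj) j = J k j - proj j := rfl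
    have h2 : w j = J k j - (∑ i, c' i • J i) j := rfl
    rw [h1, h2, hprojfun, hsum]
  -- orthogonality
  have hporth : ∀ i : Fin m, i ≠ k → ∑ l, J i l * perpRow J k l = 0 := by
    intro i hi
    have hpmem : perpRow J k ∈ (Submodule.span ℝ S)ᗮ :=
      Submodule.sub_starProjection_mem_orthogonal _
    have hu : toE (J i) ∈ Submodule.span ℝ S :=
      Submodule.subset_span ⟨i, hi, rfl⟩
    have := (Submodule.mem_orthogonal _ _).mp hpmem (toE (J i)) hu
    rw [← inner_toE]
    exact this
  -- block decomposition
  haveI : Unique {i : Fin m // ¬ i ≠ k} :=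
    ⟨⟨⟨k, by simp⟩⟩, by rintro ⟨a, ha⟩; simp only [not_not] at ha; subst ha; rfl⟩
  set e := Equiv.sumCompl (fun i : Fin m => i ≠ k) with he
  have hblocks : (J' * J'ᵀ).submatrix e e =
      Matrix.fromBlocks ((delRow J k) * (delRow J k)ᵀ) 0 0
        (Matrix.of fun _ _ => ‖perpRow J k‖ ^ 2) := by
    ext i j
    rcases i with i | i <;> rcases j with j | j
    · simp only [Matrix.submatrix_apply, he, Equiv.sumCompl_apply_inl,
        Matrix.fromBlocks_apply₁₁, Matrix.mul_apply, Matrix.transpose_apply, delRow,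
        Matrix.submatrix_apply, id_eq]
      exact Finset.sum_congr rfl fun l _ => by rw [hrowne _ i.prop, hrowne _ j.prop]
    · have hj : (j : Fin m) = k := not_not.mp j.prop
      simp only [Matrix.submatrix_apply, he, Equiv.sumCompl_apply_inl,
        Equiv.sumCompl_apply_inr, Matrix.fromBlocks_apply₁₂, Matrix.mul_apply,
        Matrix.transpose_apply, hj, Matrix.zero_apply]
      rw [← hporth i i.prop]
      exact Finset.sum_congr rfl fun l _ => by rw [hrowne _ i.prop, hrowk, ← hperp]
    · have hi : (i : Fin m) = k := not_not.mp i.prop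
      simp only [Matrix.submatrix_apply, he, Equiv.sumCompl_apply_inl,
        Equiv.sumCompl_apply_inr, Matrix.fromBlocks_apply₂₁, Matrix.mul_apply,
        Matrix.transpose_apply, hi, Matrix.zero_apply]
      rw [← hporth j j.prop]
      exact Finset.sum_congr rfl fun l _ => by
        rw [hrowne _ j.prop, hrowk, ← hperp]; ring
    · have hi : (i : Fin m) = k := not_not.mp i.prop
      have hj : (j : Fin m) = k := not_not.mp j.prop
      simp only [Matrix.submatrix_apply, he, Equiv.sumCompl_apply_inr,
        Matrix.fromBlocks_apply₂₂, Matrix.mul_apply, Matrix.transpose_apply, hi, hj,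
        Matrix.of_apply]
      rw [Finset.sum_congr rfl fun l _ => by rw [hrowk, ← hperp]]
      rw [← real_inner_self_eq_norm_sq]
      simp only [PiLp.inner_apply, RCLike.inner_apply, conj_trivial]
  have hD : (Matrix.of fun _ _ => ‖perpRow J k‖ ^ 2 :
      Matrix {i : Fin m // ¬ i ≠ k} {i : Fin m // ¬ i ≠ k} ℝ).det = ‖perpRow J k‖ ^ 2 :=
    Matrix.det_unique _
  have hdet2 : (J' * J'ᵀ).det =
      ((delRow J k) * (delRow J k)ᵀ).det * ‖perpRow J k‖ ^ 2 := by
    rw [← Matrix.det_submatrix_equiv_self e, hblocks, Matrix.det_fromBlocks_zero₂₁, hD]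
  rw [← hdet', hdet2]
  ring

theorem stmt9 {m n : ℕ} (hm : 2 ≤ m) (hmn : m ≤ n) (J : Matrix (Fin m) (Fin n) ℝ)
    (hrank : J.rank = m) :
    (⨆ k, ‖toE (J k)‖ / ‖perpRow J k‖) =
      ⨆ k, ‖toE (J k)‖ * (∏ i, singularValues (delRow J k) i) / ∏ i, singularValues J i := by
  refine iSup_congr fun k => ?_
  have hLI : LinearIndependent ℝ (fun i => J i) :=
    linearIndependent_iff_card_eq_finrank_span.mpr (by
      rw [Set.finrank, show (fun i => J i) = J.row from rfl, ← Matrix.rank_eq_finrank_span_row, hrank, Fintype.card_fin])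
  have hBLI : LinearIndependent ℝ (fun i : {i : Fin m // i ≠ k} => delRow J k i) :=
    hLI.comp _ Subtype.val_injective
  have hdB := detGram_pos _ hBLI
  have hdJ := detGram_pos _ hLI
  have hkey := key J k
  have hpnorm : 0 < ‖perpRow J k‖ := by
    rcases (norm_nonneg (perpRow J k)).lt_or_eq with h | h
    · exact h
    · exfalso
      rw [hkey, ← h] at hdJ
      simp at hdJ
  rw [prodSV, prodSV, hkey, Real.sqrt_mul (sq_nonneg _), Real.sqrt_sq (norm_nonneg _)]
  have hs : 0 < Real.sqrt ((delRow J k * (delRow J k)ᵀ).det) := Real.sqrt_pos.mpr hdB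
  field_simp
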